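/- Let p be an odd prime. Then W_p ≡ B_{p-1} − 1 + 1/p (mod p), i.e. the rational number W_p − (B_{p-1} − 1 + 1/p) equals p·(a/b) for some integers a, b with p ∤ b. -/

import Mathlib

open Finset

/-- `x ≡ y (mod p^k)` for rationals: `x - y = p^k * (c/d)` with `p ∤ d`. -/
def ratCongr (p k : ℕ) (x y : ℚ) : Prop :=
  ∃ c d : ℤ, ¬ (p : ℤ) ∣ d ∧ x - y = (p : ℚ) ^ k * ((c : ℚ) / (d : ℚ))

/-- The Wilson quotient `W_p = ((p-1)! + 1)/p` (an integer by Wilson's theorem). -/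
def wilsonQuotient (p : ℕ) : ℤ := ((Nat.factorial (p - 1) : ℤ) + 1) / p

/-- The Fermat quotient `q_p(a) = (a^(p-1) - 1)/p` (an integer for `p ∤ a`). -/
def fermatQuotient (p a : ℕ) : ℤ := ((a : ℤ) ^ (p - 1) - 1) / p

/-- A prime `p` is a Wilson prime if `p ∣ W_p`. -/
def IsWilsonPrime (p : ℕ) : Prop := (p : ℤ) ∣ wilsonQuotient p

/-- A prime `p` is a Lerch prime if `∑_{a=1}^{p-1} q_p(a) ≡ W_p (mod p²)`. -/
def IsLerchPrime (p : ℕ) : Prop :=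
  (p : ℤ) ^ 2 ∣ (∑ a ∈ Icc 1 (p - 1), fermatQuotient p a) - wilsonQuotient p

/-- The harmonic number `H_a = ∑_{k=1}^{a} 1/k`. -/
def harmonicNum (a : ℕ) : ℚ := ∑ k ∈ Icc 1 a, (1 : ℚ) / k

/-- The generalized harmonic number `H_{a,2} = ∑_{k=1}^{a} 1/k²`. -/
def harmonicNum2 (a : ℕ) : ℚ := ∑ k ∈ Icc 1 a, (1 : ℚ) / (k : ℚ) ^ 2


set_option linter.unusedSectionVars false

section Pint
variable (p : ℕ) [hp : Fact p.Prime]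

/-- p-integrality of a rational. -/
def Pint (x : ℚ) : Prop := padicNorm p x ≤ 1

variable {p}

lemma pint_intCast (z : ℤ) : Pint p z := padicNorm.of_int z

lemma pint_natCast (n : ℕ) : Pint p n := by
  simpa using pint_intCast (p := p) (n : ℤ)

lemma pint_one : Pint p 1 := by simpa using pint_natCast (p := p) 1

lemma pint_zero : Pint p 0 := by
  simp [Pint]

lemma pint_add {x y : ℚ} (hx : Pint p x) (hy : Pint p y) : Pint p (x + y) :=
  le_trans padicNorm.nonarchimedean (max_le hx hy)

lemma pint_neg {x : ℚ} (hx : Pint p x) : Pint p (-x) := by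
  rwa [Pint, padicNorm.neg]

lemma pint_sub {x y : ℚ} (hx : Pint p x) (hy : Pint p y) : Pint p (x - y) := by
  rw [sub_eq_add_neg]; exact pint_add hx (pint_neg hy)

lemma pint_mul {x y : ℚ} (hx : Pint p x) (hy : Pint p y) : Pint p (x * y) := by
  rw [Pint, padicNorm.mul]
  exact mul_le_one₀ hx (padicNorm.nonneg y) hy

lemma pint_pow {x : ℚ} (hx : Pint p x) (n : ℕ) : Pint p (x ^ n) := by
  induction n with
  | zero => simpa using pint_one
  | succ n ih => rw [pow_succ]; exact pint_mul ih hx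

lemma pint_sum {ι : Type*} (s : Finset ι) (f : ι → ℚ) (h : ∀ i ∈ s, Pint p (f i)) :
    Pint p (∑ i ∈ s, f i) := by
  classical
  induction s using Finset.induction with
  | empty => simpa using pint_zero
  | insert _ _ hni ih =>
    rw [Finset.sum_insert hni]
    exact pint_add (h _ (Finset.mem_insert_self _ _))
      (ih fun i hi => h i (Finset.mem_insert_of_mem hi))

lemma pint_div_int {c d : ℤ} (hd : ¬ (p : ℤ) ∣ d) : Pint p ((c : ℚ) / (d : ℚ)) := by
  rw [Pint, padicNorm.div, (padicNorm.int_eq_one_iff d).2 hd, div_one]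
  exact padicNorm.of_int c

lemma pint_rep {x : ℚ} (hx : Pint p x) :
    ∃ c d : ℤ, ¬ (p : ℤ) ∣ d ∧ x = (c : ℚ) / (d : ℚ) := by
  refine ⟨x.num, x.den, ?_, (Rat.num_div_den x).symm⟩
  rw [Int.natCast_dvd_natCast]
  intro hden
  rcases eq_or_ne x 0 with h0 | h0
  · rw [h0] at hden
    simp at hden
    exact hp.out.one_lt.ne' hden
  · have hnorm : padicNorm p x = (p : ℚ) ^ (-padicValRat p x) :=
      padicNorm.eq_zpow_of_nonzero h0
    have hval : 0 ≤ padicValRat p x := by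
      by_contra hneg
      push_neg at hneg
      have h1 : (1 : ℚ) < (p : ℚ) ^ (-padicValRat p x) := by
        apply one_lt_zpow₀ (by exact_mod_cast hp.out.one_lt)
        omega
      have hx' : padicNorm p x ≤ 1 := hx
      rw [hnorm] at hx'
      linarith
    -- p ∣ den, coprimality forces p ∤ num, so valuation is negative
    have hnum : ¬ (p : ℤ) ∣ x.num := by
      intro hn
      have := x.reduced
      have hpnum : p ∣ x.num.natAbs := Int.natCast_dvd_natCast.mp (by
        rwa [Int.dvd_natAbs])
      have : p ∣ Nat.gcd x.num.natAbs x.den := Nat.dvd_gcd hpnum hden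
      rw [x.reduced] at this
      have := Nat.le_of_dvd one_pos this
      have := hp.out.two_le
      omega
    have hvnum : padicValInt p x.num = 0 := padicValInt.eq_zero_of_not_dvd hnum
    have hvden : 1 ≤ padicValNat p x.den := by
      apply one_le_padicValNat_of_dvd (by positivity) hden
    rw [padicValRat] at hval
    omega

end Pint

section Bernoulli
variable {p : ℕ} [hp : Fact p.Prime]

lemma zmod_sum_range_pow (k : ℕ) :
    ∑ a ∈ range p, ((a : ZMod p)) ^ k = ∑ x : ZMod p, x ^ k := by
  refine Finset.sum_nbij' (fun a : ℕ => ((a : ZMod p))) (fun x : ZMod p => x.val) ?_ ?_ ?_ ?_ ?_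
  · intro a _; exact Finset.mem_univ _
  · intro x _; exact Finset.mem_range.2 (ZMod.val_lt x)
  · intro a ha; exact ZMod.val_cast_of_lt (Finset.mem_range.1 ha)
  · intro x _; exact ZMod.natCast_zmod_val x
  · intro a _; rfl

lemma pdvd_sum_range_pow {k : ℕ} (hk1 : 1 ≤ k) (hk : k < p - 1) :
    (p : ℤ) ∣ ∑ a ∈ range p, (a : ℤ) ^ k := by
  rw [← ZMod.intCast_zmod_eq_zero_iff_dvd]
  push_cast
  rw [zmod_sum_range_pow k]
  have hcard : Fintype.card (ZMod p) = p := ZMod.card p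
  exact FiniteField.sum_pow_lt_card_sub_one (ZMod p) k (by rw [hcard]; exact hk)

lemma pint_bernoulli : ∀ k, k < p - 1 → Pint p (bernoulli k) := by
  intro k
  induction k using Nat.strong_induction_on with
  | _ k ih =>
    intro hk
    rcases Nat.eq_zero_or_pos k with rfl | hk1
    · simpa using pint_one (p := p)
    have hp0 : (p : ℚ) ≠ 0 := Nat.cast_ne_zero.2 hp.out.pos.ne'
    have hk0 : ((k : ℚ) + 1) ≠ 0 := by positivity
    have hF := sum_range_pow p k
    rw [Finset.sum_range_succ] at hF
    have hterm : bernoulli k * (((k + 1).choose k : ℕ) : ℚ) * (p : ℚ) ^ (k + 1 - k) / ((k : ℚ) + 1)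
        = bernoulli k * p := by
      rw [Nat.choose_succ_self_right]
      have h1 : k + 1 - k = 1 := by omega
      rw [h1, pow_one]
      push_cast
      field_simp
    rw [hterm] at hF
    have hsplit : ∑ i ∈ range k, bernoulli i * (((k + 1).choose i : ℕ) : ℚ) *
          (p : ℚ) ^ (k + 1 - i) / ((k : ℚ) + 1)
        = (∑ i ∈ range k, bernoulli i * (((k + 1).choose i : ℕ) : ℚ) *
          (p : ℚ) ^ (k - i) / ((k : ℚ) + 1)) * p := by
      rw [Finset.sum_mul]
      apply Finset.sum_congr rfl
      intro i hi
      have h2 : k + 1 - i = (k - i) + 1 := by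
        have := Finset.mem_range.1 hi; omega
      rw [h2, pow_succ]
      ring
    rw [hsplit] at hF
    -- hF : S = (∑ u) * p + bernoulli k * p
    have hBk : bernoulli k = (∑ a ∈ range p, (a : ℚ) ^ k) / p
        - ∑ i ∈ range k, bernoulli i * (((k + 1).choose i : ℕ) : ℚ) *
          (p : ℚ) ^ (k - i) / ((k : ℚ) + 1) := by
      rw [hF]
      field_simp
      ring
    rw [hBk]
    apply pint_sub
    · -- S / p is p-integral
      obtain ⟨M, hM⟩ := pdvd_sum_range_pow hk1 hk
      have hSQ : (∑ a ∈ range p, (a : ℚ) ^ k) = ((∑ a ∈ range p, (a : ℤ) ^ k : ℤ) : ℚ) := by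
        push_cast; rfl
      rw [hSQ, hM]
      push_cast
      rw [mul_div_cancel_left₀ _ hp0]
      exact pint_intCast M
    · apply pint_sum
      intro i hi
      have hik : i < k := Finset.mem_range.1 hi
      have hne : ¬ (p : ℤ) ∣ ((k : ℤ) + 1) := by
        intro hd
        have : (p : ℤ) ≤ (k : ℤ) + 1 := Int.le_of_dvd (by positivity) hd
        omega
      have : bernoulli i * (((k + 1).choose i : ℕ) : ℚ) * (p : ℚ) ^ (k - i) / ((k : ℚ) + 1)
          = (bernoulli i * (((k + 1).choose i : ℕ) : ℚ) * (p : ℚ) ^ (k - i)) *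
            ((1 : ℤ) / (((k : ℤ) + 1 : ℤ) : ℚ)) := by
        push_cast
        ring
      rw [this]
      exact pint_mul (pint_mul (pint_mul (ih i hik (by omega)) (pint_natCast _))
        (pint_pow (pint_natCast p) _)) (pint_div_int hne)

end Bernoulli

section Nilp
variable {R : Type*} [CommRing R]

lemma nilp_mul {e : R} (he : e * e = 0) (x y : R) :
    (1 + e * x) * (1 + e * y) = 1 + e * (x + y) := by
  linear_combination x * y * he

lemma nilp_prod {e : R} (he : e * e = 0) {ι : Type*} (s : Finset ι) (f : ι → R) :
    ∏ a ∈ s, (1 + e * f a) = 1 + e * ∑ a ∈ s, f a := by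
  classical
  induction s using Finset.induction with
  | empty => simp
  | insert _ _ hni ih =>
    rw [Finset.prod_insert hni, ih, Finset.sum_insert hni, nilp_mul he]

lemma nilp_pow {b : R} (hb : b * b = 0) (x : R) (m : ℕ) :
    (x + b) ^ (m + 1) = x ^ (m + 1) + ((m : R) + 1) * x ^ m * b := by
  induction m with
  | zero => simp
  | succ m ih =>
    rw [pow_succ, ih]
    push_cast
    linear_combination ((m : R) + 1) * x ^ m * hb

end Nilp

section Wilson
variable {p : ℕ} [hp : Fact p.Prime]

lemma wilson_dvd : (p : ℤ) ∣ ((Nat.factorial (p - 1) : ℤ) + 1) := by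
  have h := ZMod.wilsons_lemma p
  have : (((Nat.factorial (p - 1) : ℤ) + 1 : ℤ) : ZMod p) = 0 := by
    push_cast
    rw [h]
    ring
  exact_mod_cast (ZMod.intCast_zmod_eq_zero_iff_dvd _ p).1 this

lemma wilson_mul : (p : ℤ) * wilsonQuotient p = (Nat.factorial (p - 1) : ℤ) + 1 :=
  Int.mul_ediv_cancel' wilson_dvd

lemma fermat_dvd {a : ℕ} (ha1 : 1 ≤ a) (ha2 : a < p) :
    (p : ℤ) ∣ ((a : ℤ) ^ (p - 1) - 1) := by
  have hane : (a : ZMod p) ≠ 0 := by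
    rw [Ne, ZMod.natCast_eq_zero_iff]
    intro hdvd
    have := Nat.le_of_dvd (by omega) hdvd
    omega
  have h := ZMod.pow_card_sub_one_eq_one hane
  have : (((a : ℤ) ^ (p - 1) - 1 : ℤ) : ZMod p) = 0 := by
    push_cast
    rw [h]
    ring
  exact_mod_cast (ZMod.intCast_zmod_eq_zero_iff_dvd _ p).1 this

lemma fermat_mul {a : ℕ} (ha1 : 1 ≤ a) (ha2 : a < p) :
    (p : ℤ) * (((a : ℤ) ^ (p - 1) - 1) / p) = (a : ℤ) ^ (p - 1) - 1 :=
  Int.mul_ediv_cancel' (fermat_dvd ha1 ha2)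

end Wilson

section CongA
variable {p : ℕ} [hp : Fact p.Prime]

lemma congA (hodd : Odd p) :
    (p : ℤ) ^ 2 ∣ (∑ a ∈ range p, (a : ℤ) ^ (p - 1))
      - (Nat.factorial (p - 1) : ℤ) - p := by
  have hp2 : 2 ≤ p := hp.out.two_le
  have hp3 : 3 ≤ p := by
    rcases Nat.odd_iff.1 hodd with h
    omega
  set R := ZMod (p ^ 2) with hR
  set e : ZMod (p ^ 2) := ((p : ℕ) : ZMod (p ^ 2)) with he_def
  have he : e * e = 0 := by
    have h0 : ((p ^ 2 : ℕ) : ZMod (p ^ 2)) = 0 := ZMod.natCast_self _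
    rw [he_def]
    push_cast at h0
    rw [← h0]
    ring
  set W : ℤ := wilsonQuotient p with hW_def
  have hWmul : (p : ℤ) * W = (Nat.factorial (p - 1) : ℤ) + 1 := wilson_mul
  set Q : ℕ → ℤ := fun a => ((a : ℤ) ^ (p - 1) - 1) / p with hQ_def
  have h1 : ∀ a ∈ Finset.Icc 1 (p - 1),
      ((a : ℕ) : ZMod (p ^ 2)) ^ (p - 1) = 1 + e * ((Q a : ℤ) : ZMod (p ^ 2)) := by
    intro a ha
    rw [Finset.mem_Icc] at ha
    have hfm := fermat_mul (p := p) ha.1 (by omega)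
    have hz : ((a : ℤ) ^ (p - 1) : ℤ) = 1 + (p : ℤ) * Q a := by
      rw [hQ_def]
      simp only []
      linarith [hfm]
    calc ((a : ℕ) : ZMod (p ^ 2)) ^ (p - 1) = (((a : ℤ) ^ (p - 1) : ℤ) : ZMod (p ^ 2)) := by push_cast; ring
      _ = ((1 + (p : ℤ) * Q a : ℤ) : ZMod (p ^ 2)) := by rw [← hz]
      _ = 1 + e * ((Q a : ℤ) : ZMod (p ^ 2)) := by push_cast [he_def]; ring
  have hIco : Finset.Icc 1 (p - 1) = Finset.Ico 1 p := by
    ext a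
    simp only [Finset.mem_Icc, Finset.mem_Ico]
    omega
  have hprodfact : ∏ a ∈ Finset.Icc 1 (p - 1), ((a : ℕ) : ZMod (p ^ 2))
      = ((Nat.factorial (p - 1) : ℕ) : ZMod (p ^ 2)) := by
    rw [hIco, ← Nat.cast_prod]
    have h : Finset.Ico 1 p = Finset.Ico 1 ((p - 1) + 1) := by
      congr 1
      omega
    rw [h, Finset.prod_Ico_id_eq_factorial]
  -- left-hand side of the product identity
  have hA : ((Nat.factorial (p - 1) : ℕ) : ZMod (p ^ 2)) ^ (p - 1)
      = 1 + e * ((∑ a ∈ Finset.Icc 1 (p - 1), Q a : ℤ) : ZMod (p ^ 2)) := by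
    rw [← hprodfact, ← Finset.prod_pow]
    rw [Finset.prod_congr rfl h1]
    rw [nilp_prod he]
    push_cast
    ring
  -- right-hand side via Wilson
  have hfactR : ((Nat.factorial (p - 1) : ℕ) : ZMod (p ^ 2)) = -1 + e * ((W : ℤ) : ZMod (p ^ 2)) := by
    have : ((Nat.factorial (p - 1) : ℤ) : ZMod (p ^ 2)) = (((p : ℤ) * W - 1 : ℤ) : ZMod (p ^ 2)) := by
      rw [show (p : ℤ) * W - 1 = (Nat.factorial (p - 1) : ℤ) from by linarith [hWmul]]
    push_cast at this ⊢
    rw [this, he_def]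
    push_cast
    ring
  have hb : (e * ((W : ℤ) : ZMod (p ^ 2))) * (e * ((W : ℤ) : ZMod (p ^ 2))) = 0 := by
    linear_combination (((W : ℤ) : ZMod (p ^ 2)) * ((W : ℤ) : ZMod (p ^ 2))) * he
  have hB : ((Nat.factorial (p - 1) : ℕ) : ZMod (p ^ 2)) ^ (p - 1) = 1 + e * ((W : ℤ) : ZMod (p ^ 2)) := by
    rw [hfactR]
    have hsplit : p - 1 = (p - 2) + 1 := by omega
    rw [hsplit, nilp_pow hb]
    have heven : Even ((p - 2) + 1) := by
      rw [Nat.even_iff]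
      have := Nat.odd_iff.1 hodd
      omega
    have hoddm : Odd (p - 2) := by
      rw [Nat.odd_iff]
      have := Nat.odd_iff.1 hodd
      omega
    rw [heven.neg_one_pow, hoddm.neg_one_pow]
    have hcast : ((p - 2 : ℕ) : ZMod (p ^ 2)) = e - 2 := by
      rw [he_def, Nat.cast_sub hp2]
      norm_num
    rw [hcast]
    have hpe : e * e = 0 := he
    ring_nf
    linear_combination (-((W : ℤ) : ZMod (p ^ 2))) * he
  -- conclude e * ∑ Q = e * W
  have hkey : e * ((∑ a ∈ Finset.Icc 1 (p - 1), Q a : ℤ) : ZMod (p ^ 2)) = e * ((W : ℤ) : ZMod (p ^ 2)) := by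
    have h := hA.symm.trans hB
    exact add_left_cancel h
  have hset : range p = insert 0 (Finset.Icc 1 (p - 1)) := by
    ext a
    simp only [Finset.mem_range, Finset.mem_insert, Finset.mem_Icc]
    omega
  have h0notin : (0 : ℕ) ∉ Finset.Icc 1 (p - 1) := by simp
  have hsum : ∑ a ∈ range p, ((a : ℕ) : ZMod (p ^ 2)) ^ (p - 1)
      = ((p - 1 : ℕ) : ZMod (p ^ 2)) + e * ((∑ a ∈ Finset.Icc 1 (p - 1), Q a : ℤ) : ZMod (p ^ 2)) := by
    rw [hset, Finset.sum_insert h0notin, Finset.sum_congr rfl h1]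
    rw [Nat.cast_zero, zero_pow (show p - 1 ≠ 0 by omega)]
    rw [Finset.sum_add_distrib, Finset.sum_const, ← Finset.mul_sum, Nat.card_Icc]
    have hcards : p - 1 + 1 - 1 = p - 1 := by omega
    rw [hcards]
    push_cast
    ring
  have hp1cast : ((p - 1 : ℕ) : ZMod (p ^ 2)) = e - 1 := by
    rw [he_def, Nat.cast_sub (show 1 ≤ p by omega)]
    norm_num
  have hEW : e * ((W : ℤ) : ZMod (p ^ 2)) = ((Nat.factorial (p - 1) : ℕ) : ZMod (p ^ 2)) + 1 := by
    have h := congrArg (fun z : ℤ => ((z : ℤ) : ZMod (p ^ 2))) hWmul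
    push_cast at h
    rw [he_def]
    exact h
  have hfin : (((∑ a ∈ range p, (a : ℤ) ^ (p - 1))
      - (Nat.factorial (p - 1) : ℤ) - p : ℤ) : ZMod (p ^ 2)) = 0 := by
    push_cast
    rw [hsum, hkey, hp1cast, hEW, he_def]
    ring
  have hdvd := (ZMod.intCast_zmod_eq_zero_iff_dvd _ (p ^ 2)).1 hfin
  exact_mod_cast hdvd

end CongA

section CongB
variable {p : ℕ} [hp : Fact p.Prime]

lemma congB (hodd : Odd p) : ∃ z : ℚ, Pint p z ∧
    ((∑ a ∈ range p, (a : ℤ) ^ (p - 1) : ℤ) : ℚ) - (p : ℚ) * bernoulli (p - 1)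
      = (p : ℚ) ^ 2 * z := by
  have hp2 : 2 ≤ p := hp.out.two_le
  have hp3 : 3 ≤ p := by have := Nat.odd_iff.1 hodd; omega
  have hp0 : (p : ℚ) ≠ 0 := Nat.cast_ne_zero.2 (by omega)
  have hF := sum_range_pow p (p - 1)
  have hpp : p - 1 + 1 = p := by omega
  rw [hpp] at hF
  have hd : (((p : ℚ) - 1) + 1) = (p : ℚ) := by ring
  have hd' : ((p - 1 : ℕ) : ℚ) + 1 = (p : ℚ) := by
    rw [Nat.cast_sub (show 1 ≤ p by omega)]
    ring
  rw [hd'] at hF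
  have hsplit := Finset.sum_range_succ
    (fun i => bernoulli i * ((p.choose i : ℕ) : ℚ) * (p : ℚ) ^ (p - i) / (p : ℚ)) (p - 1)
  rw [hpp] at hsplit
  rw [hsplit] at hF
  have hchoose : p.choose (p - 1) = p := by
    have h := Nat.choose_symm (show 1 ≤ p by omega) (n := p)
    rw [h, Nat.choose_one_right]
  have hexp : p - (p - 1) = 1 := by omega
  have hlast : bernoulli (p - 1) * ((p.choose (p - 1) : ℕ) : ℚ) * (p : ℚ) ^ (p - (p - 1)) / (p : ℚ)
      = bernoulli (p - 1) * (p : ℚ) := by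
    rw [hchoose, hexp, pow_one]
    field_simp
  rw [hlast] at hF
  refine ⟨(∑ i ∈ range (p - 1), bernoulli i * ((p.choose i : ℕ) : ℚ) * (p : ℚ) ^ (p - i) / (p : ℚ))
      / (p : ℚ) ^ 2, ?_, ?_⟩
  · rw [Finset.sum_div]
    apply pint_sum
    intro i hi
    have hi' : i < p - 1 := Finset.mem_range.1 hi
    rcases Nat.eq_zero_or_pos i with rfl | hipos
    · have h0 : bernoulli 0 * ((p.choose 0 : ℕ) : ℚ) * (p : ℚ) ^ (p - 0) / (p : ℚ) / (p : ℚ) ^ 2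
          = (p : ℚ) ^ (p - 3) := by
        rw [bernoulli_zero, Nat.choose_zero_right]
        rw [show p - 0 = (p - 3) + 3 from by omega]
        push_cast
        rw [pow_add]
        field_simp
      rw [h0]
      exact pint_pow (pint_natCast p) _
    · obtain ⟨c, hc⟩ := hp.out.dvd_choose_self (k := i) (show i ≠ 0 by omega) (show i < p by omega)
      have : bernoulli i * ((p.choose i : ℕ) : ℚ) * (p : ℚ) ^ (p - i) / (p : ℚ) / (p : ℚ) ^ 2
          = bernoulli i * (c : ℚ) * (p : ℚ) ^ (p - i - 2) := by
        rw [hc, show p - i = (p - i - 2) + 2 from by omega]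
        push_cast
        rw [pow_add]
        field_simp
      rw [this]
      exact pint_mul (pint_mul (pint_bernoulli i (by omega)) (pint_natCast c))
        (pint_pow (pint_natCast p) _)
  · rw [mul_div_cancel₀ _ (pow_ne_zero 2 hp0)]
    have hcastS : ((∑ a ∈ range p, (a : ℤ) ^ (p - 1) : ℤ) : ℚ)
        = ∑ k ∈ range p, (k : ℚ) ^ (p - 1) := by
      push_cast
      rfl
    rw [hcastS, hF]
    ring

end CongB

theorem stmt_0 (p : ℕ) (hp : p.Prime) (hodd : Odd p) :
    ratCongr p 1 ((wilsonQuotient p : ℚ))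
      (bernoulli (p - 1) - 1 + 1 / (p : ℚ)) := by
  haveI : Fact p.Prime := ⟨hp⟩
  have hp3 : 3 ≤ p := by
    have h1 := Nat.odd_iff.1 hodd
    have h2 := hp.two_le
    omega
  have hp0 : (p : ℚ) ≠ 0 := Nat.cast_ne_zero.2 (by omega)
  obtain ⟨m, hm⟩ := congA (p := p) hodd
  obtain ⟨z, hzint, hz⟩ := congB (p := p) hodd
  set S : ℤ := ∑ a ∈ range p, (a : ℤ) ^ (p - 1) with hS_def
  have hT : Pint p (z - (m : ℚ)) := pint_sub hzint (pint_intCast m)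
  obtain ⟨c, d, hd, hcd⟩ := pint_rep hT
  refine ⟨c, d, hd, ?_⟩
  rw [pow_one, ← hcd]
  have hpW : (p : ℚ) * ((wilsonQuotient p : ℤ) : ℚ) = (Nat.factorial (p - 1) : ℚ) + 1 := by
    exact_mod_cast congrArg (fun z : ℤ => (z : ℚ)) (wilson_mul (p := p))
  have h1 : ((S : ℤ) : ℚ) - (p : ℚ) * bernoulli (p - 1) = (p : ℚ) ^ 2 * z := hz
  have h2 : ((S : ℤ) : ℚ) - (Nat.factorial (p - 1) : ℚ) - (p : ℚ) = (p : ℚ) ^ 2 * (m : ℚ) := by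
    exact_mod_cast congrArg (fun z : ℤ => (z : ℚ)) hm
  apply mul_left_cancel₀ hp0
  have expand : (p : ℚ) * (((wilsonQuotient p : ℤ) : ℚ) - (bernoulli (p - 1) - 1 + 1 / (p : ℚ)))
      = (p : ℚ) * ((wilsonQuotient p : ℤ) : ℚ) - (p : ℚ) * bernoulli (p - 1) + (p : ℚ) - 1 := by
    field_simp
    ring
  rw [expand, hpW]
  linear_combination h1 - h2
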